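/- Let P₁,…,P_k ∈ {0,1}^{r×n} be a patch structure, α ∈ [0,1], and f_w(x) = (1/k)·Σ_{i=1}^k σ_α(wᵀPᵢx). Let μ be a probability measure on ℝⁿ symmetric about the origin with finite second moments, Σ = E_{x∼μ}[xxᵀ], and P_Σ = Σ_{i,j=1}^k PᵢΣPⱼᵀ. Then for all w, w* ∈ ℝ^r, E_{x∼μ}[(f_{w*}(x) − f_w(x))·((w* − w)ᵀ(Σ_{i=1}^k Pᵢ)x)] ≥ ((1+α)/(2k))·λ_min(P_Σ)·‖w* − w‖², where λ_min(P_Σ) is the minimum eigenvalue of the symmetric matrix P_Σ. -/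

import Mathlib

open MeasureTheory Matrix Finset
open scoped RealInnerProductSpace

noncomputable section

/-- Leaky ReLU activation with parameter `α`. -/
def lrelu (α z : ℝ) : ℝ := if 0 ≤ z then z else α * z

/-- A patch structure: each `P i` is a 0/1 matrix with exactly one 1 in each row
and at most one 1 in each column. -/
def IsPatchStruct {r n k : ℕ} (P : Fin k → Matrix (Fin r) (Fin n) ℝ) : Prop :=
  (∀ i a b, P i a b = 0 ∨ P i a b = 1) ∧
  (∀ i a, ∃! b, P i a b = 1) ∧
  (∀ i b a a', P i a b = 1 → P i a' b = 1 → a = a')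

/-- View a plain vector as an element of Euclidean space. -/
def toEuc {m : ℕ} (v : Fin m → ℝ) : EuclideanSpace ℝ (Fin m) := WithLp.toLp 2 v

/-- The one-hidden-layer convolutional network
`f_w(x) = (1/k) ∑ i, σ_α (wᵀ Pᵢ x)` with average pooling. -/
def convnet {r n k : ℕ} (α : ℝ) (P : Fin k → Matrix (Fin r) (Fin n) ℝ)
    (w : EuclideanSpace ℝ (Fin r)) (x : EuclideanSpace ℝ (Fin n)) : ℝ :=
  (1 / (k : ℝ)) * ∑ i, lrelu α ((w : Fin r → ℝ) ⬝ᵥ (P i).mulVec x)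

/-- The (uncentered) covariance matrix `Σ = E_{x∼μ}[x xᵀ]`. -/
def covMat {n : ℕ} (μ : Measure (EuclideanSpace ℝ (Fin n))) : Matrix (Fin n) (Fin n) ℝ :=
  Matrix.of fun i j => ∫ x, x i * x j ∂μ

/-- Maximum eigenvalue of a Hermitian (real symmetric) matrix. -/
def lamMax {m : ℕ} (A : Matrix (Fin m) (Fin m) ℝ) (hA : A.IsHermitian) : ℝ :=
  ⨆ i, hA.eigenvalues i

/-- Minimum eigenvalue of a Hermitian (real symmetric) matrix. -/
def lamMin {m : ℕ} (A : Matrix (Fin m) (Fin m) ℝ) (hA : A.IsHermitian) : ℝ :=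
  ⨅ i, hA.eigenvalues i

/-! ### Auxiliary lemmas -/

lemma lrelu_eq' (α z : ℝ) : lrelu α z = (1 + α) / 2 * z + (1 - α) / 2 * |z| := by
  unfold lrelu
  split_ifs with h
  · rw [abs_of_nonneg h]; ring
  · rw [abs_of_neg (lt_of_not_ge h)]; ring

lemma euc_abs_coord {n : ℕ} (x : EuclideanSpace ℝ (Fin n)) (p : Fin n) : |x p| ≤ ‖x‖ := by
  rw [EuclideanSpace.norm_eq, ← Real.sqrt_sq_eq_abs]
  apply Real.sqrt_le_sqrt
  calc (x p) ^ 2 = ‖x p‖ ^ 2 := by rw [Real.norm_eq_abs, sq_abs]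
    _ ≤ ∑ i, ‖x i‖ ^ 2 := Finset.single_le_sum (f := fun i => ‖x i‖ ^ 2)
        (fun i _ => by positivity) (Finset.mem_univ p)

lemma dot_abs_le' {n : ℕ} (c : Fin n → ℝ) (x : EuclideanSpace ℝ (Fin n)) :
    |c ⬝ᵥ (x : Fin n → ℝ)| ≤ (∑ p, |c p|) * ‖x‖ := by
  unfold dotProduct
  calc |∑ p, c p * x p| ≤ ∑ p, |c p * x p| := Finset.abs_sum_le_sum_abs _ _
    _ ≤ ∑ p, |c p| * ‖x‖ := by
        refine Finset.sum_le_sum fun p _ => ?_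
        rw [abs_mul]
        exact mul_le_mul_of_nonneg_left (euc_abs_coord x p) (abs_nonneg _)
    _ = (∑ p, |c p|) * ‖x‖ := by rw [Finset.sum_mul]

lemma cont_dot' {n : ℕ} (c : Fin n → ℝ) :
    Continuous (fun x : EuclideanSpace ℝ (Fin n) => c ⬝ᵥ (x : Fin n → ℝ)) := by
  unfold dotProduct
  exact continuous_finset_sum _ fun p _ =>
    (continuous_const.mul (EuclideanSpace.proj p).continuous)

lemma integrable_of_sq_bound' {n : ℕ} (μ : Measure (EuclideanSpace ℝ (Fin n)))
    (hmom : Integrable (fun x => ‖x‖ ^ 2) μ) (f : EuclideanSpace ℝ (Fin n) → ℝ)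
    (hf : Continuous f) (C : ℝ) (hC : ∀ x, |f x| ≤ C * ‖x‖ ^ 2) : Integrable f μ :=
  (hmom.const_mul C).mono' hf.aestronglyMeasurable
    (ae_of_all _ fun x => by simpa [Real.norm_eq_abs] using hC x)

lemma rayleigh' {m : ℕ} (A : Matrix (Fin m) (Fin m) ℝ) (hA : A.IsHermitian) (v : Fin m → ℝ) :
    (⨅ i, hA.eigenvalues i) * (∑ i, v i ^ 2) ≤ v ⬝ᵥ A.mulVec v := by
  rcases Nat.eq_zero_or_pos m with hm | hm
  · subst hm; simp [dotProduct]
  have : NeZero m := ⟨hm.ne'⟩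
  set U : Matrix (Fin m) (Fin m) ℝ := (hA.eigenvectorUnitary : Matrix (Fin m) (Fin m) ℝ) with hUdef
  set u : Fin m → ℝ := v ᵥ* U with hu
  have hstar : star U = Uᵀ := by
    rw [Matrix.star_eq_conjTranspose]
    ext i j
    simp [Matrix.conjTranspose_apply]
  have hUU : U * Uᵀ = 1 := by
    rw [← hstar]
    exact (Matrix.mem_unitaryGroup_iff).mp hA.eigenvectorUnitary.2
  have hAv : v ⬝ᵥ A.mulVec v = ∑ i, hA.eigenvalues i * u i ^ 2 := by
    conv_lhs => rw [hA.spectral_theorem]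
    simp only [Unitary.conjStarAlgAut_apply, Unitary.coe_star]
    rw [← hUdef]
    rw [hstar, ← Matrix.mulVec_mulVec, ← Matrix.mulVec_mulVec,
      Matrix.dotProduct_mulVec v U, Matrix.mulVec_transpose]
    simp only [← hu, dotProduct, Matrix.mulVec_diagonal]
    refine Finset.sum_congr rfl fun i _ => ?_
    simp [RCLike.ofReal]
    ring
  have huu : ∑ i, u i ^ 2 = ∑ i, v i ^ 2 := by
    have h1 : u ⬝ᵥ u = v ⬝ᵥ v := by
      rw [hu]
      nth_rw 2 [← Matrix.mulVec_transpose]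
      rw [Matrix.dotProduct_mulVec, Matrix.vecMul_vecMul, hUU, Matrix.vecMul_one]
    simpa [dotProduct, sq] using h1
  rw [hAv, ← huu, Finset.mul_sum]
  refine Finset.sum_le_sum fun i _ => ?_
  exact mul_le_mul_of_nonneg_right
    (ciInf_le (Set.Finite.bddBelow (Set.finite_range _)) i) (sq_nonneg _)

lemma integrable_coord' {n : ℕ} (μ : Measure (EuclideanSpace ℝ (Fin n)))
    (hmom : Integrable (fun x => ‖x‖ ^ 2) μ) (p q : Fin n) :
    Integrable (fun x : EuclideanSpace ℝ (Fin n) => x p * x q) μ := by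
  refine integrable_of_sq_bound' μ hmom _
    ((EuclideanSpace.proj p).continuous.mul (EuclideanSpace.proj q).continuous) 1 fun x => ?_
  rw [abs_mul, one_mul, sq]
  exact mul_le_mul (euc_abs_coord x p) (euc_abs_coord x q) (abs_nonneg _) (norm_nonneg _)

lemma integrable_dot_mul' {n : ℕ} (μ : Measure (EuclideanSpace ℝ (Fin n)))
    (hmom : Integrable (fun x => ‖x‖ ^ 2) μ) (c d : Fin n → ℝ) :
    Integrable (fun x : EuclideanSpace ℝ (Fin n) =>
      (c ⬝ᵥ (x : Fin n → ℝ)) * (d ⬝ᵥ (x : Fin n → ℝ))) μ := by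
  refine integrable_of_sq_bound' μ hmom _ ((cont_dot' c).mul (cont_dot' d))
    ((∑ p, |c p|) * (∑ p, |d p|)) fun x => ?_
  rw [abs_mul]
  calc |c ⬝ᵥ (x : Fin n → ℝ)| * |d ⬝ᵥ (x : Fin n → ℝ)|
      ≤ ((∑ p, |c p|) * ‖x‖) * ((∑ p, |d p|) * ‖x‖) :=
        mul_le_mul (dot_abs_le' c x) (dot_abs_le' d x) (abs_nonneg _) (by positivity)
    _ = (∑ p, |c p|) * (∑ p, |d p|) * ‖x‖ ^ 2 := by ring

lemma dot_cov' {n : ℕ} (μ : Measure (EuclideanSpace ℝ (Fin n)))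
    (hmom : Integrable (fun x => ‖x‖ ^ 2) μ) (c d : Fin n → ℝ) :
    ∫ x, (c ⬝ᵥ (x : Fin n → ℝ)) * (d ⬝ᵥ (x : Fin n → ℝ)) ∂μ
      = c ⬝ᵥ (covMat μ).mulVec d := by
  have key : ∀ x : EuclideanSpace ℝ (Fin n),
      (c ⬝ᵥ (x : Fin n → ℝ)) * (d ⬝ᵥ (x : Fin n → ℝ))
        = ∑ p, ∑ q, (c p * d q) * (x p * x q) := fun x => by
    rw [dotProduct, dotProduct, Finset.sum_mul_sum]
    exact Finset.sum_congr rfl fun p _ => Finset.sum_congr rfl fun q _ => by ring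
  rw [integral_congr_ae (ae_of_all _ key)]
  rw [integral_finset_sum _ fun p _ => integrable_finset_sum _ fun q _ =>
    (integrable_coord' μ hmom p q).const_mul _]
  have : ∀ p, ∫ x, ∑ q, (c p * d q) * (x p * x q) ∂μ
      = ∑ q, (c p * d q) * ∫ x, x p * x q ∂μ := fun p => by
    rw [integral_finset_sum _ fun q _ => (integrable_coord' μ hmom p q).const_mul _]
    exact Finset.sum_congr rfl fun q _ => MeasureTheory.integral_const_mul _ _
  simp only [this]
  rw [dotProduct]
  refine Finset.sum_congr rfl fun p _ => ?_
  rw [Matrix.mulVec, dotProduct, Finset.mul_sum]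
  refine Finset.sum_congr rfl fun q _ => ?_
  simp only [covMat, Matrix.of_apply]
  ring

lemma sum_mulVec' {m r n : Type*} [Fintype m] [Fintype n] (s : Finset m)
    (A : m → Matrix r n ℝ) (x : n → ℝ) :
    (∑ i ∈ s, A i).mulVec x = ∑ i ∈ s, (A i).mulVec x := by
  funext j
  simp [Matrix.mulVec, dotProduct, Matrix.sum_apply, Finset.sum_mul]
  rw [Finset.sum_comm]

lemma dotProduct_sum' {m n : Type*} [Fintype m] [Fintype n] (s : Finset m)
    (v : n → ℝ) (w : m → n → ℝ) : v ⬝ᵥ (∑ i ∈ s, w i) = ∑ i ∈ s, v ⬝ᵥ w i := by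
  simp [dotProduct, Finset.mul_sum, Finset.sum_apply]
  rw [Finset.sum_comm]

/-- For a patch structure, `α ∈ [0,1]`, and a symmetric probability
measure `μ` with finite second moments, covariance `Σ` and `P_Σ = ∑_{i,j} Pᵢ Σ Pⱼᵀ`,
`E[(f_{w*}(x) − f_w(x))·((w*−w)ᵀ(∑ᵢPᵢ)x)] ≥ ((1+α)/(2k))·λ_min(P_Σ)·‖w*−w‖²`. -/
theorem stmt5 {n r k : ℕ} (hk : 0 < k) (P : Fin k → Matrix (Fin r) (Fin n) ℝ)
    (hP : IsPatchStruct P) (α : ℝ) (hα : α ∈ Set.Icc (0 : ℝ) 1)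
    (μ : Measure (EuclideanSpace ℝ (Fin n))) [IsProbabilityMeasure μ]
    (hsymm : μ.map (fun x => -x) = μ)
    (hmom : Integrable (fun x => ‖x‖ ^ 2) μ)
    (hPSig : (∑ i, ∑ j, P i * covMat μ * (P j)ᵀ).IsHermitian)
    (w wstar : EuclideanSpace ℝ (Fin r)) :
    ∫ x, (convnet α P wstar x - convnet α P w x)
        * ((fun j => wstar j - w j) ⬝ᵥ (∑ i, P i).mulVec x) ∂μ
      ≥ (1 + α) / (2 * k) * lamMin (∑ i, ∑ j, P i * covMat μ * (P j)ᵀ) hPSig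
          * ‖wstar - w‖ ^ 2 := by
  obtain ⟨hα0, hα1⟩ := hα
  have hk' : (k : ℝ) ≠ 0 := Nat.cast_ne_zero.mpr hk.ne'
  set v : Fin r → ℝ := fun j => wstar j - w j with hv
  set Cv : Fin k → Fin n → ℝ := fun i => (P i)ᵀ.mulVec v with hCv
  set Ca : Fin k → Fin n → ℝ := fun i => (P i)ᵀ.mulVec wstar with hCa
  set Cb : Fin k → Fin n → ℝ := fun i => (P i)ᵀ.mulVec w with hCb
  set S : EuclideanSpace ℝ (Fin n) → ℝ :=
    fun x => ∑ i, Cv i ⬝ᵥ (x : Fin n → ℝ) with hS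
  set T : EuclideanSpace ℝ (Fin n) → ℝ :=
    fun x => ∑ i, (|Ca i ⬝ᵥ (x : Fin n → ℝ)| - |Cb i ⬝ᵥ (x : Fin n → ℝ)|) with hT
  -- basic dot product rewrites
  have hdotv : ∀ (i : Fin k) (x : EuclideanSpace ℝ (Fin n)),
      v ⬝ᵥ (P i).mulVec x = Cv i ⬝ᵥ (x : Fin n → ℝ) := fun i x => by
    rw [Matrix.dotProduct_mulVec, ← Matrix.mulVec_transpose]
  have hdota : ∀ (i : Fin k) (x : EuclideanSpace ℝ (Fin n)),
      (wstar : Fin r → ℝ) ⬝ᵥ (P i).mulVec x = Ca i ⬝ᵥ (x : Fin n → ℝ) := fun i x => by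
    rw [Matrix.dotProduct_mulVec, ← Matrix.mulVec_transpose]
  have hdotb : ∀ (i : Fin k) (x : EuclideanSpace ℝ (Fin n)),
      (w : Fin r → ℝ) ⬝ᵥ (P i).mulVec x = Cb i ⬝ᵥ (x : Fin n → ℝ) := fun i x => by
    rw [Matrix.dotProduct_mulVec, ← Matrix.mulVec_transpose]
  -- pointwise identity
  have key : ∀ x : EuclideanSpace ℝ (Fin n),
      (convnet α P wstar x - convnet α P w x)
        * ((fun j => wstar j - w j) ⬝ᵥ (∑ i, P i).mulVec x)
      = (1 + α) / (2 * k) * S x ^ 2 + (1 - α) / (2 * k) * (T x * S x) := by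
    intro x
    have h2 : (fun j => wstar j - w j) ⬝ᵥ (∑ i, P i).mulVec x = S x := by
      rw [← hv, sum_mulVec', dotProduct_sum']
      exact Finset.sum_congr rfl fun i _ => hdotv i x
    have h1 : convnet α P wstar x - convnet α P w x
        = (1 / k) * ((1 + α) / 2 * S x + (1 - α) / 2 * T x) := by
      unfold convnet
      rw [← mul_sub, ← Finset.sum_sub_distrib]
      congr 1
      have : ∀ i : Fin k,
          lrelu α ((wstar : Fin r → ℝ) ⬝ᵥ (P i).mulVec x)
            - lrelu α ((w : Fin r → ℝ) ⬝ᵥ (P i).mulVec x)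
          = (1 + α) / 2 * (Cv i ⬝ᵥ (x : Fin n → ℝ))
            + (1 - α) / 2 * (|Ca i ⬝ᵥ (x : Fin n → ℝ)| - |Cb i ⬝ᵥ (x : Fin n → ℝ)|) := by
        intro i
        rw [lrelu_eq', lrelu_eq', hdota i x, hdotb i x]
        have : Cv i ⬝ᵥ (x : Fin n → ℝ)
            = Ca i ⬝ᵥ (x : Fin n → ℝ) - Cb i ⬝ᵥ (x : Fin n → ℝ) := by
          rw [← sub_dotProduct]
          congr 1
          rw [hCv, hCa, hCb]
          funext p
          simp [Matrix.mulVec, dotProduct, hv, mul_sub, Finset.sum_sub_distrib]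
        rw [this]
        ring
      rw [Finset.sum_congr rfl fun i _ => this i, Finset.sum_add_distrib,
        ← Finset.mul_sum, ← Finset.mul_sum]
    rw [h1, h2]
    field_simp
  -- integrability
  have hSsq_int : Integrable (fun x => S x ^ 2) μ := by
    have : ∀ x : EuclideanSpace ℝ (Fin n),
        S x ^ 2 = ∑ i, ∑ j, (Cv i ⬝ᵥ (x : Fin n → ℝ)) * (Cv j ⬝ᵥ (x : Fin n → ℝ)) := by
      intro x; rw [hS, sq, Finset.sum_mul_sum]
    simp only [this]
    exact integrable_finset_sum _ fun i _ => integrable_finset_sum _ fun j _ =>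
      integrable_dot_mul' μ hmom _ _
  have hScont : Continuous S := continuous_finset_sum _ fun i _ => cont_dot' (Cv i)
  have hTcont : Continuous T := continuous_finset_sum _ fun i _ =>
    ((cont_dot' (Ca i)).abs.sub (cont_dot' (Cb i)).abs)
  have hTS_int : Integrable (fun x => T x * S x) μ := by
    refine integrable_of_sq_bound' μ hmom _ (hTcont.mul hScont)
      ((∑ i, ((∑ p, |Ca i p|) + ∑ p, |Cb i p|)) * (∑ i, ∑ p, |Cv i p|)) fun x => ?_
    rw [abs_mul]
    have hSb : |S x| ≤ (∑ i, ∑ p, |Cv i p|) * ‖x‖ := by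
      rw [hS, Finset.sum_mul]
      exact (Finset.abs_sum_le_sum_abs _ _).trans
        (Finset.sum_le_sum fun i _ => dot_abs_le' (Cv i) x)
    have hTb : |T x| ≤ (∑ i, ((∑ p, |Ca i p|) + ∑ p, |Cb i p|)) * ‖x‖ := by
      rw [hT, Finset.sum_mul]
      refine (Finset.abs_sum_le_sum_abs _ _).trans (Finset.sum_le_sum fun i _ => ?_)
      rw [add_mul]
      exact (abs_sub _ _).trans (add_le_add
        ((abs_abs _).trans_le (dot_abs_le' (Ca i) x))
        ((abs_abs _).trans_le (dot_abs_le' (Cb i) x)))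
    calc |T x| * |S x|
        ≤ ((∑ i, ((∑ p, |Ca i p|) + ∑ p, |Cb i p|)) * ‖x‖)
          * ((∑ i, ∑ p, |Cv i p|) * ‖x‖) :=
          mul_le_mul hTb hSb (abs_nonneg _) (by positivity)
      _ = _ := by ring
  -- odd part vanishes
  have hodd : ∫ x, T x * S x ∂μ = 0 := by
    have hcoe : ∀ (c : Fin n → ℝ) (x : EuclideanSpace ℝ (Fin n)),
        c ⬝ᵥ ((-x : EuclideanSpace ℝ (Fin n)) : Fin n → ℝ) = -(c ⬝ᵥ (x : Fin n → ℝ)) := by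
      intro c x
      simp [dotProduct, PiLp.neg_apply, mul_neg, Finset.sum_neg_distrib]
    have hneg : ∀ x : EuclideanSpace ℝ (Fin n), T (-x) * S (-x) = -(T x * S x) := by
      intro x
      have hSneg : S (-x) = -S x := by
        simp only [hS]
        rw [← Finset.sum_neg_distrib]
        exact Finset.sum_congr rfl fun i _ => hcoe (Cv i) x
      have hTneg : T (-x) = T x := by
        simp only [hT]
        refine Finset.sum_congr rfl fun i _ => ?_
        rw [hcoe, hcoe, abs_neg, abs_neg]
      rw [hSneg, hTneg]; ring
    have h1 : ∫ x, T x * S x ∂μ = -∫ x, T x * S x ∂μ := by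
      conv_lhs => rw [← hsymm]
      rw [integral_map (φ := fun x => -x) (f := fun x => T x * S x) (measurable_neg.aemeasurable)
        ((hTcont.mul hScont).aestronglyMeasurable.mono_ac
          (by rw [hsymm]))]
      rw [integral_congr_ae (ae_of_all _ hneg), integral_neg]
    linarith
  -- value of the quadratic part
  have hSsq : ∫ x, S x ^ 2 ∂μ
      = v ⬝ᵥ (∑ i, ∑ j, P i * covMat μ * (P j)ᵀ).mulVec v := by
    have hexp : ∀ x : EuclideanSpace ℝ (Fin n),
        S x ^ 2 = ∑ i, ∑ j, (Cv i ⬝ᵥ (x : Fin n → ℝ)) * (Cv j ⬝ᵥ (x : Fin n → ℝ)) := by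
      intro x; rw [hS, sq, Finset.sum_mul_sum]
    rw [integral_congr_ae (ae_of_all _ hexp)]
    rw [integral_finset_sum _ fun i _ => integrable_finset_sum _ fun j _ =>
      integrable_dot_mul' μ hmom _ _]
    have : ∀ i, ∫ x, ∑ j, (Cv i ⬝ᵥ (x : Fin n → ℝ)) * (Cv j ⬝ᵥ (x : Fin n → ℝ)) ∂μ
        = ∑ j, Cv i ⬝ᵥ (covMat μ).mulVec (Cv j) := fun i => by
      rw [integral_finset_sum _ fun j _ => integrable_dot_mul' μ hmom _ _]
      exact Finset.sum_congr rfl fun j _ => dot_cov' μ hmom _ _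
    simp only [this]
    rw [sum_mulVec', dotProduct_sum']
    refine Finset.sum_congr rfl fun i _ => ?_
    rw [sum_mulVec', dotProduct_sum']
    refine Finset.sum_congr rfl fun j _ => ?_
    conv_rhs => rw [Matrix.mul_assoc, ← Matrix.mulVec_mulVec, ← Matrix.mulVec_mulVec,
      Matrix.dotProduct_mulVec, ← Matrix.mulVec_transpose]
  -- put things together
  have hint : ∫ x, (convnet α P wstar x - convnet α P w x)
      * ((fun j => wstar j - w j) ⬝ᵥ (∑ i, P i).mulVec x) ∂μ
      = (1 + α) / (2 * k) * (v ⬝ᵥ (∑ i, ∑ j, P i * covMat μ * (P j)ᵀ).mulVec v) := by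
    rw [integral_congr_ae (ae_of_all _ key),
      integral_add (hSsq_int.const_mul _) (hTS_int.const_mul _),
      MeasureTheory.integral_const_mul, MeasureTheory.integral_const_mul, hodd, hSsq]
    ring
  have hnorm : ‖wstar - w‖ ^ 2 = ∑ i, v i ^ 2 := by
    rw [EuclideanSpace.norm_eq, Real.sq_sqrt (Finset.sum_nonneg fun i _ => by positivity)]
    refine Finset.sum_congr rfl fun i _ => ?_
    rw [hv]
    simp [Real.norm_eq_abs, sq_abs]
  have hc1 : 0 ≤ (1 + α) / (2 * k) := by positivity
  rw [ge_iff_le, hint, hnorm]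
  have := rayleigh' _ hPSig v
  calc (1 + α) / (2 * k) * lamMin _ hPSig * (∑ i, v i ^ 2)
      = (1 + α) / (2 * k) * (lamMin _ hPSig * ∑ i, v i ^ 2) := by ring
    _ ≤ (1 + α) / (2 * k) * (v ⬝ᵥ (∑ i, ∑ j, P i * covMat μ * (P j)ᵀ).mulVec v) :=
        mul_le_mul_of_nonneg_left this hc1
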